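/- Let χ be an integer, M(q) = ∏_{k≥1}(1−q^k)^{−k} over ℚ, N(q) = q (d/dq) log M(q), and for power series f_i = ∑ a^{(i)}_n q^n and a subset Δ ⊆ ℤ³_{≥0} define {f₁·f₂·f₃}_Δ = ∑_{(n₁,n₂,n₃)∈Δ} a^{(1)}_{n₁} a^{(2)}_{n₂} a^{(3)}_{n₃} q^{n₁+n₂+n₃}. With Δ = {(m₁,m₂,m₃) ∈ ℤ³_{≥0} : −m₃ ≤ m₁−m₂ < m₃}, set DT2(q) = (1/4)·M(q)^{2χ} − (χ/2)·{M(q)^χ · M(q)^χ · N(q)}_Δ. Then the coefficient of q¹ in DT2(q) equals 0. -/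

import Mathlib

open PowerSeries
open scoped Classical

/-- The MacMahon function `M(q) = ∏_{k≥1} (1 − q^k)^{−k}` as a formal power series over
`ℚ`: its coefficient of `q^n` is the corresponding coefficient of the finite product
`∏_{k=1}^{n} (1 − q^k)^{−k}` (factors with `k > n` do not affect degrees `≤ n`). -/
noncomputable def MacMahon : PowerSeries ℚ :=
  PowerSeries.mk fun n =>
    PowerSeries.coeff (R := ℚ) n
      (∏ k ∈ Finset.Icc 1 n, ((1 - (PowerSeries.X : PowerSeries ℚ) ^ k)⁻¹) ^ k)

/-- `f^χ` for an integer exponent `χ` (for `f` with invertible constant term). -/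
noncomputable def zpowPS (f : PowerSeries ℚ) (χ : ℤ) : PowerSeries ℚ :=
  f ^ χ.toNat * f⁻¹ ^ (-χ).toNat

/-- `N(q) = q·(d/dq) log M(q) = q·M'(q)/M(q)`. -/
noncomputable def Nser : PowerSeries ℚ :=
  PowerSeries.X * PowerSeries.derivativeFun MacMahon * MacMahon⁻¹

/-- `{f₁·f₂·f₃}_Δ = ∑_{(n₁,n₂,n₃)∈Δ} a¹_{n₁} a²_{n₂} a³_{n₃} q^{n₁+n₂+n₃}` for a subset
`Δ ⊆ ℤ³_{≥0}` given by a predicate on `ℕ³`. -/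
noncomputable def brace (P : ℕ → ℕ → ℕ → Prop) (f g h : PowerSeries ℚ) : PowerSeries ℚ :=
  PowerSeries.mk fun n =>
    ∑ p ∈ (Finset.range (n + 1) ×ˢ Finset.range (n + 1) ×ˢ Finset.range (n + 1)).filter
        (fun p => p.1 + p.2.1 + p.2.2 = n ∧ P p.1 p.2.1 p.2.2),
      PowerSeries.coeff (R := ℚ) p.1 f * PowerSeries.coeff (R := ℚ) p.2.1 g * PowerSeries.coeff (R := ℚ) p.2.2 h

/-- `Δ = {(m₁,m₂,m₃) ∈ ℤ³_{≥0} : −m₃ ≤ m₁ − m₂ < m₃}`. -/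
def DeltaP (m₁ m₂ m₃ : ℕ) : Prop :=
  -(m₃ : ℤ) ≤ (m₁ : ℤ) - (m₂ : ℤ) ∧ (m₁ : ℤ) - (m₂ : ℤ) < (m₃ : ℤ)

/-- `DT2(q) = (1/4)·M(q)^{2χ} − (χ/2)·{M(q)^χ · M(q)^χ · N(q)}_Δ`. -/
noncomputable def DT2 (χ : ℤ) : PowerSeries ℚ :=
  ((1 : ℚ) / 4) • zpowPS MacMahon (2 * χ) -
    ((χ : ℚ) / 2) • brace DeltaP (zpowPS MacMahon χ) (zpowPS MacMahon χ) Nser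

lemma coeff_one_mul' (f g : PowerSeries ℚ) :
    coeff (R := ℚ) 1 (f * g) = constantCoeff (R := ℚ) f * coeff (R := ℚ) 1 g + coeff (R := ℚ) 1 f * constantCoeff (R := ℚ) g := by
  rw [coeff_mul]
  simp [Finset.Nat.antidiagonal_succ, coeff_zero_eq_constantCoeff, Prod.map]

lemma coeff_one_pow (f : PowerSeries ℚ) (h : constantCoeff (R := ℚ) f = 1) (n : ℕ) :
    coeff (R := ℚ) 1 (f ^ n) = n * coeff (R := ℚ) 1 f := by
  induction n with
  | zero => simp
  | succ n ih =>
    rw [pow_succ, coeff_one_mul', ih, map_pow, h]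
    push_cast; ring

lemma constantCoeff_M : constantCoeff (R := ℚ) MacMahon = 1 := by
  rw [← coeff_zero_eq_constantCoeff, MacMahon, coeff_mk]
  simp

lemma coeff_one_M : coeff (R := ℚ) 1 MacMahon = 1 := by
  rw [MacMahon, coeff_mk]
  have h0 : constantCoeff (R := ℚ) (1 - X : PowerSeries ℚ) = 1 := by simp
  have h : (1 - X : PowerSeries ℚ) * (1 - X)⁻¹ = 1 :=
    PowerSeries.mul_inv_cancel _ (by rw [h0]; norm_num)
  have h1 : coeff (R := ℚ) 1 ((1 - X : PowerSeries ℚ)⁻¹) = 1 := by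
    have := congrArg (coeff (R := ℚ) 1) h
    rw [coeff_one_mul', h0, constantCoeff_inv, h0] at this
    simp at this
    linarith
  simp [h1]

lemma constantCoeff_Minv : constantCoeff (R := ℚ) MacMahon⁻¹ = 1 := by
  rw [constantCoeff_inv, constantCoeff_M]; norm_num

lemma Mmul : MacMahon * MacMahon⁻¹ = 1 :=
  PowerSeries.mul_inv_cancel _ (by rw [constantCoeff_M]; norm_num)

lemma coeff_one_Minv : coeff (R := ℚ) 1 MacMahon⁻¹ = -1 := by
  have := congrArg (coeff (R := ℚ) 1) Mmul
  rw [coeff_one_mul', constantCoeff_M, constantCoeff_Minv, coeff_one_M] at this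
  simp at this
  linarith

lemma constantCoeff_zpow (χ : ℤ) : constantCoeff (R := ℚ) (zpowPS MacMahon χ) = 1 := by
  rw [zpowPS, map_mul, map_pow, map_pow, constantCoeff_M, constantCoeff_Minv]
  simp

lemma coeff_one_zpow (χ : ℤ) : coeff (R := ℚ) 1 (zpowPS MacMahon χ) = χ := by
  rw [zpowPS, coeff_one_mul']
  simp only [map_pow, constantCoeff_M, constantCoeff_Minv, one_pow, one_mul, mul_one]
  rw [coeff_one_pow _ constantCoeff_M, coeff_one_pow _ constantCoeff_Minv,
    coeff_one_M, coeff_one_Minv]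
  have h : ((χ.toNat : ℚ)) - (((-χ).toNat : ℚ)) = (χ : ℚ) := by
    exact_mod_cast Int.toNat_sub_toNat_neg χ
  linarith

lemma constantCoeff_N : constantCoeff (R := ℚ) Nser = 0 := by
  rw [Nser, mul_assoc, map_mul, constantCoeff_X, zero_mul]

lemma coeff_one_N : coeff (R := ℚ) 1 Nser = 1 := by
  rw [Nser, mul_assoc, coeff_one_mul', constantCoeff_X, zero_mul, zero_add,
    PowerSeries.coeff_one_X, one_mul, ← coeff_zero_eq_constantCoeff, coeff_mul]
  simp [coeff_derivativeFun, coeff_one_M, coeff_zero_eq_constantCoeff, constantCoeff_Minv, constantCoeff_M]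
  rw [← coeff_zero_eq_constantCoeff_apply, derivativeFun]
  show coeff 0 (derivative ℚ MacMahon) = 1
  simp [coeff_derivative, coeff_one_M]

theorem stmt8 (χ : ℤ) : PowerSeries.coeff (R := ℚ) 1 (DT2 χ) = 0 := by
  rw [DT2, map_sub, map_smul, map_smul, coeff_one_zpow, brace, coeff_mk]
  rw [show (Finset.range 2 ×ˢ Finset.range 2 ×ˢ Finset.range 2).filter
      (fun p => p.1 + p.2.1 + p.2.2 = 1 ∧ DeltaP p.1 p.2.1 p.2.2) = {(0, 0, 1)} by
    ext ⟨a, b, c⟩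
    simp [Finset.mem_filter, Finset.mem_product, Finset.mem_range, Finset.mem_singleton,
      DeltaP, Prod.mk.injEq]
    omega]
  rw [Finset.sum_singleton]
  simp only [coeff_zero_eq_constantCoeff, constantCoeff_zpow, coeff_one_N]
  rw [smul_eq_mul, smul_eq_mul]
  push_cast
  ring
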